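/- arXiv:1104.4402 — 10 statements merged into one kernel-verified Lean document; each statement's English description precedes it below -/
import Mathlib

section
/- Let H(x₁,…,x_{k+1}) = x₁x₂⋯x_{k+1} and let V_f(x₁,…,x_{k+1}) = (c x_{k+1}/(1 + x₁x₂⋯x_{k+1}), x₁, …, x_k). Then H ∘ V_f = φ ∘ H on the set where 1 + x₁⋯x_{k+1} ≠ 0, where φ(t) = ct/(1+t). That is, V_f is semiconjugate to the one-dimensional Riccati map via the product map H. -/
/-- The product map H semiconjugates the vectorization V_f of the rational
recurrence to the Riccati map φ(t) = ct/(1+t): H ∘ V_f = φ ∘ H whenever the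
denominator 1 + x₁⋯x_{k+1} is nonzero. -/
theorem semiconjugacy_product_map (k : ℕ) (hk : 1 ≤ k) (c : ℝ) (hc : 0 < c)
    (H : (Fin (k + 1) → ℝ) → ℝ) (hH : ∀ x, H x = ∏ i, x i)
    (Vf : (Fin (k + 1) → ℝ) → (Fin (k + 1) → ℝ))
    (hVf : ∀ x, Vf x =
      Fin.cons (c * x (Fin.last k) / (1 + ∏ i, x i)) (fun i : Fin k => x i.castSucc))
    (φ : ℝ → ℝ) (hφ : ∀ t, φ t = c * t / (1 + t)) :
    ∀ x : Fin (k + 1) → ℝ, 1 + ∏ i, x i ≠ 0 → H (Vf x) = φ (H x) := by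
  intro x hx
  have hP : ∏ i, x i = (∏ i : Fin k, x i.castSucc) * x (Fin.last k) :=
    (Fin.prod_univ_castSucc fun i => x i)
  rw [hH, hH, hVf, hφ, Fin.prod_cons, hP]
  field_simp
end

section
/- If a sequence (x_n)_{n ≥ -k} of real numbers satisfies x_{n+1} = c x_{n-k}/(1 + x_n x_{n-1}⋯x_{n-k}) for all n ≥ 0 (with all denominators nonzero), then the product sequence P_n = x_n x_{n-1}⋯x_{n-k} satisfies the Riccati recurrence P_{n+1} = c P_n/(1 + P_n) for all n ≥ 0. -/
/-- If (x_n) solves the rational recurrence (indices shifted so that x j here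
is x_{j-k} in the paper), then the product of k+1 consecutive terms satisfies
the Riccati recurrence P_{n+1} = c P_n / (1 + P_n). -/
theorem product_satisfies_riccati (k : ℕ) (hk : 1 ≤ k) (c : ℝ) (hc : 0 < c)
    (x : ℕ → ℝ)
    (hden : ∀ n : ℕ, 1 + ∏ i ∈ Finset.range (k + 1), x (n + i) ≠ 0)
    (hrec : ∀ n : ℕ,
      x (n + k + 1) = c * x n / (1 + ∏ i ∈ Finset.range (k + 1), x (n + i))) :
    ∀ n : ℕ,
      (∏ i ∈ Finset.range (k + 1), x (n + 1 + i)) =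
        c * (∏ i ∈ Finset.range (k + 1), x (n + i)) /
          (1 + ∏ i ∈ Finset.range (k + 1), x (n + i)) := by
  intro n
  have hQ1 : (∏ i ∈ Finset.range (k + 1), x (n + 1 + i)) =
      (∏ i ∈ Finset.range k, x (n + 1 + i)) * x (n + 1 + k) :=
    Finset.prod_range_succ _ _
  have hQ2 : (∏ i ∈ Finset.range (k + 1), x (n + i)) =
      (∏ i ∈ Finset.range k, x (n + 1 + i)) * x n := by
    rw [Finset.prod_range_succ']
    congr 1
    apply Finset.prod_congr rfl
    intro i _
    congr 1
    omega
  have hx : x (n + 1 + k) = c * x n / (1 + ∏ i ∈ Finset.range (k + 1), x (n + i)) := by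
    rw [show n + 1 + k = n + k + 1 by omega]
    exact hrec n
  have hd := hden n
  rw [hQ1, hx, hQ2]
  field_simp
end

section
/- Suppose the initial conditions x_{-k},…,x_0 satisfy x_{-k} x_{-k+1}⋯x_0 = -1/(∑_{i=0}^{m} cⁱ) for some m ≥ 0. Then the sequence generated by x_{n+1} = c x_{n-k}/(1 + x_n⋯x_{n-k}) satisfies x_{n} x_{n-1}⋯x_{n-k} = -1/(∑_{i=0}^{m-n} cⁱ) for 0 ≤ n ≤ m; in particular x_m x_{m-1}⋯x_{m-k} = -1, so the iteration is undefined at step m+1. -/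
/-- If the initial product equals -1/(∑_{i=0}^m cⁱ) then, along the recurrence,
the product of k+1 consecutive terms at time n equals -1/(∑_{i=0}^{m-n} cⁱ) for
0 ≤ n ≤ m; in particular it equals -1 at time m, so the next step is undefined.
(Indices shifted: x j here is x_{j-k} in the paper.) -/
theorem forbidden_set_forward (k : ℕ) (hk : 1 ≤ k) (c : ℝ) (hc : 0 < c)
    (m : ℕ) (x : ℕ → ℝ)
    (h0 : (∏ i ∈ Finset.range (k + 1), x i) =
      -1 / ∑ i ∈ Finset.range (m + 1), c ^ i)
    (hrec : ∀ n : ℕ, n < m →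
      x (n + k + 1) = c * x n / (1 + ∏ i ∈ Finset.range (k + 1), x (n + i))) :
    (∀ n : ℕ, n ≤ m →
        (∏ i ∈ Finset.range (k + 1), x (n + i)) =
          -1 / ∑ i ∈ Finset.range (m - n + 1), c ^ i) ∧
      (∏ i ∈ Finset.range (k + 1), x (m + i)) = -1 := by
  have hSpos : ∀ j : ℕ, 0 < ∑ i ∈ Finset.range (j + 1), c ^ i := by
    intro j
    exact Finset.sum_pos (fun i _ => pow_pos hc i) (by simp)
  have main : ∀ n : ℕ, n ≤ m →
      (∏ i ∈ Finset.range (k + 1), x (n + i)) =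
        -1 / ∑ i ∈ Finset.range (m - n + 1), c ^ i := by
    intro n
    induction n with
    | zero => intro _; simpa using h0
    | succ n ih =>
      intro hn
      have hn' : n < m := hn
      have hPn := ih (le_of_lt hn')
      -- abbreviations
      set S' : ℝ := ∑ i ∈ Finset.range (m - (n + 1) + 1), c ^ i with hS'
      have hmn : m - n = (m - (n + 1)) + 1 := by omega
      have hSrel : (∑ i ∈ Finset.range (m - n + 1), c ^ i) = c * S' + 1 := by
        rw [hmn]
        rw [geom_sum_succ]
      have hS'pos : 0 < S' := hSpos _
      set Q : ℝ := ∏ i ∈ Finset.range k, x (n + 1 + i) with hQ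
      have hPQ : (∏ i ∈ Finset.range (k + 1), x (n + i)) = Q * x n := by
        rw [Finset.prod_range_succ']
        congr 1
        apply Finset.prod_congr rfl
        intro i _
        congr 1
        omega
      have hP1Q : (∏ i ∈ Finset.range (k + 1), x (n + 1 + i)) = Q * x (n + 1 + k) := by
        rw [Finset.prod_range_succ]
      have hx := hrec n hn'
      have hxx : x (n + 1 + k) = c * x n / (1 + Q * x n) := by
        have : n + 1 + k = n + k + 1 := by omega
        rw [this, hx, hPQ]
      have hden : (1 : ℝ) + Q * x n = c * S' / (c * S' + 1) := by
        rw [← hPQ, hPn, hSrel]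
        have h1 : c * S' + 1 ≠ 0 := by positivity
        field_simp
        ring
      have hdenne : (1 : ℝ) + Q * x n ≠ 0 := by
        rw [hden]
        have h1 : c * S' + 1 > 0 := by positivity
        positivity
      have hfin : (∏ i ∈ Finset.range (k + 1), x (n + 1 + i)) = c * (Q * x n) / (1 + Q * x n) := by
        rw [hP1Q, hxx]
        field_simp
      rw [hfin, ← hPQ, hPn, hSrel]
      have h1 : c * S' + 1 ≠ 0 := by positivity
      have h2 : c * S' ≠ 0 := by positivity
      have h3 : (1 : ℝ) + -1 / (c * S' + 1) = c * S' / (c * S' + 1) := by field_simp; ring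
      rw [h3]
      have h4 : S' ≠ 0 := ne_of_gt hS'pos
      field_simp
  refine ⟨main, ?_⟩
  have := main m le_rfl
  simpa using this
end

section
/- Conversely, if a sequence (x_n) satisfying x_{n+1} = c x_{n-k}/(1 + x_n⋯x_{n-k}) for 0 ≤ n < n₀ reaches a point where x_{n₀} x_{n₀-1}⋯x_{n₀-k} = -1, then the initial conditions satisfy x_0 x_{-1}⋯x_{-k} = -1/(∑_{i=0}^{n₀} cⁱ). Hence the forbidden set of the equation is exactly ⋃_{m≥0} {(f₁,…,f_{k+1}) : f₁ f₂⋯f_{k+1} = -1/∑_{i=0}^m cⁱ}. -/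
/-- The solution sequence of x_{n+1} = c x_{n-k}/(1 + x_n ⋯ x_{n-k}) generated
from the initial tuple f = (x_{-k}, …, x_0); indices shifted so `seqx k c f j`
is x_{j-k}.  (Division by zero follows Lean's convention; the forbidden set is
detected by a vanishing denominator.) -/
noncomputable def seqx (k : ℕ) (c : ℝ) (f : Fin (k + 1) → ℝ) : ℕ → ℝ
  | n =>
    if h : n < k + 1 then f ⟨n, h⟩
    else
      c * seqx k c f (n - (k + 1)) /
        (1 + ∏ i ∈ Finset.range (k + 1), seqx k c f (n - 1 - i))
  decreasing_by
  · omega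
  · omega

lemma S_pos {c : ℝ} (hc : 0 < c) (m : ℕ) :
    0 < ∑ i ∈ Finset.range (m + 1), c ^ i :=
  Finset.sum_pos (fun i _ => pow_pos hc i) Finset.nonempty_range_add_one

lemma S_succ (c : ℝ) (m : ℕ) :
    ∑ i ∈ Finset.range (m + 2), c ^ i = 1 + c * ∑ i ∈ Finset.range (m + 1), c ^ i := by
  rw [Finset.sum_range_succ']
  simp [pow_succ, Finset.mul_sum, mul_comm]
  ring

lemma key {c : ℝ} (hc : 0 < c) (P : ℕ → ℝ) (n₀ : ℕ)
    (hne : ∀ n < n₀, 1 + P n ≠ 0)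
    (hrec : ∀ n < n₀, P (n + 1) = c * P n / (1 + P n))
    (h : P n₀ = -1) :
    ∀ j, j ≤ n₀ → P (n₀ - j) = -1 / ∑ i ∈ Finset.range (j + 1), c ^ i := by
  intro j
  induction j with
  | zero => intro _; simpa using h
  | succ j ih =>
    intro hj
    have ihv := ih (by omega)
    have hn : n₀ - (j + 1) < n₀ := by omega
    have hr := hrec _ hn
    have he : n₀ - (j + 1) + 1 = n₀ - j := by omega
    rw [he, ihv] at hr
    have hS : (0:ℝ) < ∑ i ∈ Finset.range (j + 1), c ^ i := S_pos hc j
    have hd := hne _ hn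
    rw [S_succ]
    have hS2 : (0:ℝ) < 1 + c * ∑ i ∈ Finset.range (j + 1), c ^ i := by positivity
    field_simp at hr ⊢
    nlinarith [hr]

lemma keyup {c : ℝ} (hc : 0 < c) (P : ℕ → ℝ)
    (hrec : ∀ n, P (n + 1) = c * P n / (1 + P n)) (m : ℕ)
    (h0 : P 0 = -1 / ∑ i ∈ Finset.range (m + 1), c ^ i) :
    ∀ j, j ≤ m → P j = -1 / ∑ i ∈ Finset.range (m - j + 1), c ^ i := by
  intro j
  induction j with
  | zero => intro _; simpa using h0
  | succ j ih =>
    intro hj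
    have ihv := ih (by omega)
    set t := m - (j + 1) with ht
    have he : m - j = t + 1 := by omega
    rw [he] at ihv
    have hSt : (0:ℝ) < ∑ i ∈ Finset.range (t + 1), c ^ i := S_pos hc t
    have hSt1 : (0:ℝ) < ∑ i ∈ Finset.range (t + 2), c ^ i := S_pos hc (t + 1)
    rw [hrec, ihv, S_succ]
    rw [S_succ] at hSt1
    field_simp
    ring

lemma seqx_lt (k : ℕ) (c : ℝ) (f : Fin (k + 1) → ℝ) {n : ℕ} (h : n < k + 1) :
    seqx k c f n = f ⟨n, h⟩ := by
  rw [seqx]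
  simp [h]

lemma seqx_rec (k : ℕ) (c : ℝ) (f : Fin (k + 1) → ℝ) (n : ℕ) :
    seqx k c f (n + k + 1) =
      c * seqx k c f n /
        (1 + ∏ i ∈ Finset.range (k + 1), seqx k c f (n + k - i)) := by
  rw [seqx]
  rw [dif_neg (by omega), show n + k + 1 - (k + 1) = n from by omega]
  simp [Nat.add_sub_cancel]

lemma rev (k n : ℕ) (y : ℕ → ℝ) :
    ∏ i ∈ Finset.range (k + 1), y (n + k - i) =
      ∏ i ∈ Finset.range (k + 1), y (n + i) := by
  rw [← Finset.prod_range_reflect]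
  apply Finset.prod_congr rfl
  intro i hi
  simp only [Finset.mem_range] at hi
  congr 1
  omega

lemma prod_shift {c : ℝ} (k n : ℕ) (x : ℕ → ℝ)
    (hx : x (n + k + 1) = c * x n / (1 + ∏ i ∈ Finset.range (k + 1), x (n + i))) :
    ∏ i ∈ Finset.range (k + 1), x (n + 1 + i) =
      c * (∏ i ∈ Finset.range (k + 1), x (n + i)) /
        (1 + ∏ i ∈ Finset.range (k + 1), x (n + i)) := by
  have e1 : ∏ i ∈ Finset.range (k + 1), x (n + 1 + i) =
      (∏ i ∈ Finset.range k, x (n + 1 + i)) * x (n + k + 1) := by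
    rw [Finset.prod_range_succ]
    congr 2
    omega
  have e2 : ∏ i ∈ Finset.range (k + 1), x (n + i) =
      (∏ i ∈ Finset.range k, x (n + 1 + i)) * x n := by
    rw [Finset.prod_range_succ']
    congr 1
    apply Finset.prod_congr rfl
    intro i _
    congr 1
    omega
  rw [e1, hx, e2]
  ring

/-- Converse direction of the forbidden-set theorem, together with the
characterization of the forbidden set: if the product of k+1 consecutive terms
equals -1 at time n₀ then the initial product is -1/(∑_{i=0}^{n₀} cⁱ); hence
the forbidden set is exactly ⋃ₘ { f : f₁⋯f_{k+1} = -1/∑_{i=0}^m cⁱ }. -/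
theorem forbidden_set_converse_and_characterization (k : ℕ) (hk : 1 ≤ k)
    (c : ℝ) (hc : 0 < c) :
    (∀ (x : ℕ → ℝ) (n₀ : ℕ),
      (∀ n : ℕ, n < n₀ → 1 + ∏ i ∈ Finset.range (k + 1), x (n + i) ≠ 0) →
      (∀ n : ℕ, n < n₀ →
        x (n + k + 1) = c * x n / (1 + ∏ i ∈ Finset.range (k + 1), x (n + i))) →
      (∏ i ∈ Finset.range (k + 1), x (n₀ + i)) = -1 →
      (∏ i ∈ Finset.range (k + 1), x i) =
        -1 / ∑ i ∈ Finset.range (n₀ + 1), c ^ i) ∧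
    {f : Fin (k + 1) → ℝ |
        ∃ n : ℕ, 1 + ∏ i ∈ Finset.range (k + 1), seqx k c f (n + k - i) = 0} =
      ⋃ m : ℕ, {f : Fin (k + 1) → ℝ |
        (∏ i, f i) = -1 / ∑ i ∈ Finset.range (m + 1), c ^ i} := by
  constructor
  · intro x n₀ hne hrec hprod
    have h := key hc (fun n => ∏ i ∈ Finset.range (k + 1), x (n + i)) n₀ hne
      (fun n hn => prod_shift k n x (hrec n hn)) hprod n₀ le_rfl
    simp only [Nat.sub_self, zero_add] at h
    exact h
  · ext f
    simp only [Set.mem_setOf_eq, Set.mem_iUnion]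
    set y := seqx k c f with hy
    have hQrec : ∀ n, (fun n => ∏ i ∈ Finset.range (k + 1), y (n + i)) (n + 1) =
        c * (fun n => ∏ i ∈ Finset.range (k + 1), y (n + i)) n /
          (1 + (fun n => ∏ i ∈ Finset.range (k + 1), y (n + i)) n) := by
      intro n
      apply prod_shift k n y
      rw [hy, seqx_rec, rev]
    have hQ0 : (∏ i, f i) = ∏ i ∈ Finset.range (k + 1), y (0 + i) := by
      rw [← Fin.prod_univ_eq_prod_range (fun i => y (0 + i)) (k + 1)]
      apply Finset.prod_congr rfl
      intro i _
      rw [hy, zero_add, seqx_lt k c f i.isLt]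
    constructor
    · rintro ⟨n, hn⟩
      rw [rev] at hn
      have hex : ∃ n, 1 + ∏ i ∈ Finset.range (k + 1), y (n + i) = 0 := ⟨n, hn⟩
      classical
      set n₀ := Nat.find hex with hn₀
      have hspec : 1 + ∏ i ∈ Finset.range (k + 1), y (n₀ + i) = 0 := Nat.find_spec hex
      have hmin : ∀ m < n₀, 1 + ∏ i ∈ Finset.range (k + 1), y (m + i) ≠ 0 :=
        fun m hm => Nat.find_min hex hm
      have h := key hc (fun n => ∏ i ∈ Finset.range (k + 1), y (n + i)) n₀ hmin
        (fun n _ => hQrec n) (by show ∏ i ∈ Finset.range (k + 1), y (n₀ + i) = -1; linarith) n₀ le_rfl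
      simp only [Nat.sub_self] at h
      exact ⟨n₀, by rw [hQ0]; exact h⟩
    · rintro ⟨m, hm⟩
      refine ⟨m, ?_⟩
      rw [rev]
      have h := keyup hc (fun n => ∏ i ∈ Finset.range (k + 1), y (n + i)) hQrec m
        (by show ∏ i ∈ Finset.range (k + 1), y (0 + i) = _; rw [← hQ0]; exact hm) m le_rfl
      simp only [Nat.sub_self] at h
      rw [h]
      norm_num
end

section
/- Let 0 < c < 1 and let (x_n)_{n ≥ -k} be a nonnegative solution of x_{n+1} = c x_{n-k}/(1 + x_n⋯x_{n-k}). Then for all n ≥ -k, 0 ≤ x_{n+1} ≤ c^{⌈(n+1)/(k+1)⌉} · max{x_{-k}, x_{-k+1}, …, x_0}. -/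
/-- For 0 < c < 1, every nonnegative solution satisfies
0 ≤ x_{n+1} ≤ c^{⌈(n+1)/(k+1)⌉} · max{x_{-k},…,x_0} for all n ≥ -k.
(Indices shifted: x j here is x_{j-k} in the paper, so the claim is about
x j for j ≥ 1 with exponent ⌈(j-k)/(k+1)⌉.) -/
theorem exponential_bound (k : ℕ) (hk : 1 ≤ k) (c : ℝ) (hc0 : 0 < c) (hc1 : c < 1)
    (x : ℕ → ℝ) (hnonneg : ∀ n, 0 ≤ x n)
    (hrec : ∀ n : ℕ,
      x (n + k + 1) = c * x n / (1 + ∏ i ∈ Finset.range (k + 1), x (n + i))) :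
    ∀ j : ℕ, 1 ≤ j →
      0 ≤ x j ∧
        x j ≤ c ^ (⌈((j : ℚ) - k) / (k + 1)⌉ : ℤ) *
          (Finset.range (k + 1)).sup'
            (Finset.nonempty_range_iff.mpr (Nat.succ_ne_zero k)) x := by
  set M := (Finset.range (k + 1)).sup'
      (Finset.nonempty_range_iff.mpr (Nat.succ_ne_zero k)) x with hM
  have hM0 : 0 ≤ M := le_trans (hnonneg 0)
    (Finset.le_sup' x (Finset.mem_range.mpr (Nat.succ_pos k)))
  have key : ∀ n : ℕ, x (n + k + 1) ≤ c * x n := by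
    intro n
    rw [hrec n]
    have hden : 1 ≤ 1 + ∏ i ∈ Finset.range (k + 1), x (n + i) :=
      le_add_of_nonneg_right (Finset.prod_nonneg fun i _ => hnonneg _)
    exact div_le_self (mul_nonneg hc0.le (hnonneg n)) hden
  have main : ∀ j : ℕ, x j ≤ c ^ (⌈((j : ℚ) - k) / (k + 1)⌉ : ℤ) * M := by
    intro j
    induction j using Nat.strong_induction_on with
    | _ j ih =>
      rcases le_or_gt j k with hjk | hjk
      · have h0 : (⌈((j : ℚ) - k) / (k + 1)⌉ : ℤ) = 0 := by
          apply Int.ceil_eq_zero_iff.mpr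
          constructor
          · rw [lt_div_iff₀ (by positivity : (0:ℚ) < (k:ℚ) + 1)]
            have : (0:ℚ) ≤ (j:ℚ) := by positivity
            linarith
          · apply div_nonpos_of_nonpos_of_nonneg
            · simp only [sub_nonpos]
              exact_mod_cast hjk
            · positivity
        rw [h0, zpow_zero, one_mul]
        exact Finset.le_sup' x (Finset.mem_range.mpr (Nat.lt_succ_of_le hjk))
      · obtain ⟨n, rfl⟩ : ∃ n, j = n + k + 1 :=
          ⟨j - k - 1, by omega⟩
        have hlt : n < n + k + 1 := by omega
        have hstep : (⌈(((n + k + 1 : ℕ) : ℚ) - k) / (k + 1)⌉ : ℤ)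
            = ⌈((n : ℚ) - k) / (k + 1)⌉ + 1 := by
          have heq : (((n + k + 1 : ℕ) : ℚ) - k) / (k + 1)
              = ((n : ℚ) - k) / (k + 1) + 1 := by
            have hk1 : ((k : ℚ) + 1) ≠ 0 := by positivity
            field_simp
            push_cast
            ring
          rw [heq, Int.ceil_add_one]
        calc x (n + k + 1) ≤ c * x n := key n
          _ ≤ c * (c ^ (⌈((n : ℚ) - k) / (k + 1)⌉ : ℤ) * M) :=
              mul_le_mul_of_nonneg_left (ih n hlt) hc0.le
          _ = c ^ (⌈(((n + k + 1 : ℕ) : ℚ) - k) / (k + 1)⌉ : ℤ) * M := by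
              rw [hstep, zpow_add_one₀ (ne_of_gt hc0)]
              ring
  intro j _
  exact ⟨hnonneg j, main j⟩
end

section
/- Let 0 < c < 1. Every solution of x_{n+1} = c x_{n-k}/(1 + x_n⋯x_{n-k}) with nonnegative initial conditions converges exponentially to 0: there exist constants C ≥ 0 and γ ∈ (0,1) (depending on the initial data) such that 0 ≤ x_n ≤ C γⁿ for all n ≥ 1. -/
/-- For 0 < c < 1, every solution with nonnegative initial data converges
exponentially to 0: there are C ≥ 0 and γ ∈ (0,1) with 0 ≤ x_n ≤ C γⁿ for
n ≥ 1.  (Indices shifted: x j here is x_{j-k} in the paper.) -/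
theorem exponential_convergence_to_zero (k : ℕ) (hk : 1 ≤ k) (c : ℝ)
    (hc0 : 0 < c) (hc1 : c < 1) (x : ℕ → ℝ)
    (hinit : ∀ i : ℕ, i ≤ k → 0 ≤ x i)
    (hrec : ∀ n : ℕ,
      x (n + k + 1) = c * x n / (1 + ∏ i ∈ Finset.range (k + 1), x (n + i))) :
    ∃ C : ℝ, 0 ≤ C ∧ ∃ γ : ℝ, 0 < γ ∧ γ < 1 ∧
      ∀ n : ℕ, 1 ≤ n → 0 ≤ x (n + k) ∧ x (n + k) ≤ C * γ ^ n := by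
  -- all terms nonnegative
  have hnn : ∀ m : ℕ, 0 ≤ x m := by
    intro m
    induction m using Nat.strong_induction_on with
    | _ m ih =>
      rcases le_or_gt m k with h | h
      · exact hinit m h
      · obtain ⟨n, rfl⟩ : ∃ n, m = n + k + 1 :=
          ⟨m - (k + 1), by omega⟩
        rw [hrec n]
        apply div_nonneg
        · exact mul_nonneg hc0.le (ih n (by omega))
        · have : 0 ≤ ∏ i ∈ Finset.range (k + 1), x (n + i) :=
            Finset.prod_nonneg fun i _ => ih (n + i) (by
              have := Finset.mem_range.mp ‹i ∈ Finset.range (k+1)›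
              omega)
          linarith
  -- one-step decay
  have hdec : ∀ n : ℕ, x (n + (k + 1)) ≤ c * x n := by
    intro n
    have h1 : (1:ℝ) ≤ 1 + ∏ i ∈ Finset.range (k + 1), x (n + i) := by
      have : 0 ≤ ∏ i ∈ Finset.range (k + 1), x (n + i) :=
        Finset.prod_nonneg fun i _ => hnn _
      linarith
    have := hrec n
    rw [show n + (k+1) = n + k + 1 by omega, this]
    exact div_le_self (mul_nonneg hc0.le (hnn n)) h1
  -- iterated decay
  have hiter : ∀ q m : ℕ, x (m + q * (k + 1)) ≤ c ^ q * x m := by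
    intro q
    induction q with
    | zero => intro m; simp
    | succ q ih =>
      intro m
      have h1 : x (m + (q + 1) * (k + 1)) ≤ c * x (m + q * (k + 1)) := by
        have := hdec (m + q * (k + 1))
        have e : m + q * (k + 1) + (k + 1) = m + (q + 1) * (k + 1) := by ring
        rwa [e] at this
      calc x (m + (q + 1) * (k + 1)) ≤ c * x (m + q * (k + 1)) := h1
        _ ≤ c * (c ^ q * x m) := by
            exact mul_le_mul_of_nonneg_left (ih m) hc0.le
        _ = c ^ (q + 1) * x m := by ring
  set M : ℝ := ∑ i ∈ Finset.range (k + 1), x i with hM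
  have hM0 : 0 ≤ M := Finset.sum_nonneg fun i _ => hnn i
  have hMle : ∀ i : ℕ, i ≤ k → x i ≤ M := fun i hi =>
    Finset.single_le_sum (fun j _ => hnn j) (Finset.mem_range.mpr (by omega))
  set γ : ℝ := c ^ ((k + 1 : ℝ)⁻¹) with hγ
  have hγ0 : 0 < γ := Real.rpow_pos_of_pos hc0 _
  have hγ1 : γ < 1 := Real.rpow_lt_one hc0.le hc1 (by positivity)
  refine ⟨M, hM0, γ, hγ0, hγ1, fun n hn => ⟨hnn _, ?_⟩⟩
  set j := n + k with hj
  set i := j % (k + 1) with hi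
  set q := j / (k + 1) with hq
  have hik : i ≤ k := by
    have := Nat.mod_lt j (show 0 < k + 1 by omega); omega
  have hjeq : j = i + q * (k + 1) := (Nat.mod_add_div' j (k + 1)).symm
  have hx1 : x j ≤ c ^ q * x i := by rw [hjeq]; exact hiter q i
  have hx2 : c ^ q * x i ≤ c ^ q * M :=
    mul_le_mul_of_nonneg_left (hMle i hik) (by positivity)
  -- n ≤ q * (k+1)
  have hnq : n ≤ q * (k + 1) := by
    have h1 : n + k ≤ q * (k + 1) + k := by
      calc n + k = i + q * (k + 1) := hjeq
        _ ≤ k + q * (k + 1) := Nat.add_le_add_right hik _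
        _ = q * (k + 1) + k := Nat.add_comm _ _
    exact Nat.le_of_add_le_add_right h1
  -- c^q ≤ γ^n
  have hcq : c ^ q ≤ γ ^ n := by
    have e1 : γ ^ n = c ^ ((k + 1 : ℝ)⁻¹ * n) := by
      rw [hγ, ← Real.rpow_natCast (c ^ ((k + 1 : ℝ)⁻¹)) n, ← Real.rpow_mul hc0.le]
    have e2 : c ^ q = c ^ (q : ℝ) := (Real.rpow_natCast c q).symm
    rw [e1, e2]
    apply Real.rpow_le_rpow_of_exponent_ge hc0 hc1.le
    rw [inv_mul_le_iff₀ (by positivity)]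
    have : (n : ℝ) ≤ (q * (k + 1) : ℕ) := Nat.cast_le.mpr hnq
    push_cast at this ⊢
    linarith
  calc x (n + k) ≤ c ^ q * M := le_trans hx1 hx2
    _ ≤ γ ^ n * M := mul_le_mul_of_nonneg_right hcq hM0
    _ = M * γ ^ n := mul_comm _ _
end

section
/- Let c > 1 and let (x_n)_{n≥-k} be a solution of x_{n+1} = c x_{n-k}/(1 + x_n⋯x_{n-k}) with strictly positive initial conditions. Then (x_n) is bounded: there exists M > 0 with 0 < x_n ≤ M for all n. -/
/-- For c > 1, every solution with strictly positive initial data is bounded: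
0 < x_n ≤ M for some M > 0.  (Indices shifted: x j here is x_{j-k}.) -/
theorem positive_solutions_bounded (k : ℕ) (hk : 1 ≤ k) (c : ℝ) (hc : 1 < c)
    (x : ℕ → ℝ) (hinit : ∀ i : ℕ, i ≤ k → 0 < x i)
    (hrec : ∀ n : ℕ,
      x (n + k + 1) = c * x n / (1 + ∏ i ∈ Finset.range (k + 1), x (n + i))) :
    ∃ M : ℝ, 0 < M ∧ ∀ n : ℕ, 0 < x n ∧ x n ≤ M := by
  set P : ℕ → ℝ := fun n => ∏ i ∈ Finset.range (k + 1), x (n + i) with hPdef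
  -- positivity of x
  have hxpos : ∀ n, 0 < x n := by
    intro n
    induction n using Nat.strong_induction_on with
    | _ n ih =>
      rcases le_or_gt n k with h | h
      · exact hinit n h
      · have hn : n = (n - (k + 1)) + k + 1 := by omega
        rw [hn, hrec]
        apply div_pos
        · exact mul_pos (by linarith) (ih _ (by omega))
        · have hp : 0 < ∏ i ∈ Finset.range (k + 1), x (n - (k + 1) + i) := by
            apply Finset.prod_pos
            intro i hi
            simp only [Finset.mem_range] at hi
            exact ih _ (by omega)
          linarith
  have hPpos : ∀ n, 0 < P n := by
    intro n
    apply Finset.prod_pos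
    intro i _
    exact hxpos _
  -- recurrence for P
  have hPrec : ∀ n, P (n + 1) = c * P n / (1 + P n) := by
    intro n
    have hQ : ∀ i ∈ Finset.range k, x (n + (i + 1)) = x (n + 1 + i) := by
      intro i _
      congr 1
      omega
    have h1 : P n = (∏ i ∈ Finset.range k, x (n + 1 + i)) * x n := by
      rw [hPdef]
      simp only
      rw [Finset.prod_range_succ']
      rw [Finset.prod_congr rfl hQ]
      simp
    have h2 : P (n + 1) = (∏ i ∈ Finset.range k, x (n + 1 + i)) * x (n + k + 1) := by
      rw [hPdef]
      simp only
      rw [Finset.prod_range_succ]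
      congr 1
      congr 1
      omega
    have hr : x (n + k + 1) = c * x n / (1 + P n) := hrec n
    rw [h2, hr, h1]
    have := hxpos n
    ring
  have hPne : ∀ n, (1 : ℝ) + P n ≠ 0 := fun n => by have := hPpos n; linarith
  -- key identity
  have hkey : ∀ n, x (n + k + 1) * P n = x n * P (n + 1) := by
    intro n
    rw [hrec n, hPrec n]
    field_simp
    ring
  -- the bound on initial values
  set B : ℝ := ∑ i ∈ Finset.range (k + 1), x i with hBdef
  have hBpos : 0 < B := Finset.sum_pos (fun i _ => hxpos i) (by simp)
  have hB : ∀ i, i ≤ k → x i ≤ B := by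
    intro i hi
    apply Finset.single_le_sum (fun j _ => (hxpos j).le)
    simp only [Finset.mem_range]
    omega
  have hc1 : (0 : ℝ) < c - 1 := by linarith
  rcases le_total (P 0) (c - 1) with hcase | hcase
  · -- increasing case
    have hmono : ∀ n, P n ≤ c - 1 ∧ P n ≤ P (n + 1) := by
      intro n
      induction n with
      | zero =>
        constructor
        · exact hcase
        · rw [hPrec 0, le_div_iff₀ (by have := hPpos 0; linarith)]
          nlinarith [hPpos 0]
      | succ m ihm =>
        have hle : P (m + 1) ≤ c - 1 := by
          rw [hPrec m, div_le_iff₀ (by have := hPpos m; linarith)]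
          nlinarith [hPpos m, ihm.1]
        refine ⟨hle, ?_⟩
        rw [hPrec (m + 1), le_div_iff₀ (by have := hPpos (m + 1); linarith)]
        nlinarith [hPpos (m + 1)]
    have hmono' : Monotone P := monotone_nat_of_le_succ (fun n => (hmono n).2)
    -- invariant
    have hinv : ∀ n, x n * P 0 ≤ B * P n := by
      intro n
      induction n using Nat.strong_induction_on with
      | _ n ih =>
        rcases le_or_gt n k with h | h
        · have h1 : x n ≤ B := hB n h
          have h2 : P 0 ≤ P n := hmono' (Nat.zero_le n)
          nlinarith [hxpos n, hPpos 0, hBpos]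
        · obtain ⟨m, rfl⟩ : ∃ m, n = m + k + 1 := ⟨n - (k + 1), by omega⟩
          have heq := hkey m
          have h1 : x m * P 0 ≤ B * P m := ih m (by omega)
          have h2 : P (m + 1) ≤ P (m + k + 1) := hmono' (by omega)
          have hPm := hPpos m
          have hPm1 := hPpos (m + 1)
          have hPn := hPpos (m + k + 1)
          have key : (x (m + k + 1) * P 0) * P m ≤ (B * P (m + k + 1)) * P m := by
            calc (x (m + k + 1) * P 0) * P m = (x m * P 0) * P (m + 1) := by
                  linear_combination P 0 * heq
              _ ≤ (B * P m) * P (m + 1) := mul_le_mul_of_nonneg_right h1 hPm1.le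
              _ ≤ (B * P (m + k + 1)) * P m := by
                  nlinarith [mul_le_mul_of_nonneg_left h2 (mul_nonneg hBpos.le hPm.le)]
          exact le_of_mul_le_mul_right key hPm
    refine ⟨B * (c - 1) / P 0, div_pos (mul_pos hBpos hc1) (hPpos 0), fun n => ⟨hxpos n, ?_⟩⟩
    have h1 := hinv n
    have h2 := (hmono n).1
    rw [le_div_iff₀ (hPpos 0)]
    nlinarith [hBpos]
  · -- decreasing case
    have hmono : ∀ n, c - 1 ≤ P n ∧ P (n + 1) ≤ P n := by
      intro n
      induction n with
      | zero =>
        constructor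
        · exact hcase
        · rw [hPrec 0, div_le_iff₀ (by have := hPpos 0; linarith)]
          nlinarith [hPpos 0]
      | succ m ihm =>
        have hge : c - 1 ≤ P (m + 1) := by
          rw [hPrec m, le_div_iff₀ (by have := hPpos m; linarith)]
          nlinarith [hPpos m, ihm.1]
        refine ⟨hge, ?_⟩
        rw [hPrec (m + 1), div_le_iff₀ (by have := hPpos (m + 1); linarith)]
        nlinarith [hPpos (m + 1)]
    have hinv : ∀ n, x n ≤ B := by
      intro n
      induction n using Nat.strong_induction_on with
      | _ n ih =>
        rcases le_or_gt n k with h | h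
        · exact hB n h
        · obtain ⟨m, rfl⟩ : ∃ m, n = m + k + 1 := ⟨n - (k + 1), by omega⟩
          have heq := hkey m
          have h1 : x m ≤ B := ih m (by omega)
          have h2 : P (m + 1) ≤ P m := (hmono m).2
          have hPm := hPpos m
          have hPm1 := hPpos (m + 1)
          have key : x (m + k + 1) * P m ≤ B * P m := by
            calc x (m + k + 1) * P m = x m * P (m + 1) := heq
              _ ≤ B * P (m + 1) := mul_le_mul_of_nonneg_right h1 hPm1.le
              _ ≤ B * P m := mul_le_mul_of_nonneg_left h2 hBpos.le
          exact le_of_mul_le_mul_right key hPm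
    exact ⟨B, hBpos, fun n => ⟨hxpos n, hinv n⟩⟩
end

section
/- Let c > 1 and let (x_n) be a positive solution of x_{n+1} = c x_{n-k}/(1 + x_n⋯x_{n-k}). Then the product P_n = x_n x_{n-1}⋯x_{n-k} converges to c - 1 as n → ∞. -/
open Filter Topology

/-- For c > 1 and a positive solution, the product of k+1 consecutive terms
converges to c - 1.  (Indices shifted: x j here is x_{j-k}.) -/
theorem product_tendsto_c_sub_one (k : ℕ) (hk : 1 ≤ k) (c : ℝ) (hc : 1 < c)
    (x : ℕ → ℝ) (hinit : ∀ i : ℕ, i ≤ k → 0 < x i)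
    (hrec : ∀ n : ℕ,
      x (n + k + 1) = c * x n / (1 + ∏ i ∈ Finset.range (k + 1), x (n + i))) :
    Tendsto (fun n : ℕ => ∏ i ∈ Finset.range (k + 1), x (n + i)) atTop
      (𝓝 (c - 1)) := by
  have hx : ∀ n, 0 < x n := by
    intro n
    induction n using Nat.strong_induction_on with
    | _ n ih =>
      rcases le_or_gt n k with h | h
      · exact hinit n h
      · obtain ⟨m, rfl⟩ : ∃ m, n = m + k + 1 := ⟨n - (k + 1), by omega⟩
        rw [hrec m]
        have hP : 0 < ∏ i ∈ Finset.range (k + 1), x (m + i) := by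
          apply Finset.prod_pos
          intro i hi
          simp only [Finset.mem_range] at hi
          exact ih (m + i) (by omega)
        exact div_pos (mul_pos (by linarith) (ih m (by omega))) (by linarith)
  set P : ℕ → ℝ := fun n => ∏ i ∈ Finset.range (k + 1), x (n + i) with hPdef
  have hPpos : ∀ n, 0 < P n := fun n => Finset.prod_pos (fun i _ => hx _)
  have hPrec : ∀ n, P (n + 1) = c * P n / (1 + P n) := by
    intro n
    have h1 : ∏ i ∈ Finset.range (k + 2), x (n + i) = P n * x (n + k + 1) := by
      rw [Finset.prod_range_succ]
      rfl
    have h2 : ∏ i ∈ Finset.range (k + 2), x (n + i) = x n * P (n + 1) := by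
      rw [Finset.prod_range_succ', mul_comm]
      congr 1
      apply Finset.prod_congr rfl
      intro i _
      congr 1
      omega
    have key : x n * P (n + 1) = P n * (c * x n / (1 + P n)) := by
      rw [← h2, h1, hrec n]
    have h1P : (0:ℝ) < 1 + P n := by linarith [hPpos n]
    have hxn := hx n
    field_simp at key
    rw [eq_div_iff h1P.ne']
    apply mul_left_cancel₀ hxn.ne'
    nlinarith [key]
  set y : ℕ → ℝ := fun n => (P n)⁻¹ with hydef
  have hyrec : ∀ n, y (n + 1) = (y n + 1) / c := by
    intro n
    have h1P : (0:ℝ) < 1 + P n := by linarith [hPpos n]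
    simp only [hydef, hPrec n]
    have hc0 : (0:ℝ) < c := by linarith
    rw [inv_div, eq_div_iff hc0.ne', div_mul_eq_mul_div,
      div_eq_iff (mul_pos hc0 (hPpos n)).ne']
    field_simp [(hPpos n).ne']
  have hform : ∀ n, y n = c⁻¹ ^ n * (y 0 - (c - 1)⁻¹) + (c - 1)⁻¹ := by
    intro n
    induction n with
    | zero => simp
    | succ n ih =>
      rw [hyrec, ih]
      have hc0 : (0:ℝ) < c := by linarith
      have hc1 : c - 1 ≠ 0 := by linarith
      field_simp
      linear_combination (c⁻¹ ^ n + c⁻¹ ^ n * y 0 - c * c⁻¹ ^ n * y 0) * mul_inv_cancel₀ hc0.ne'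
  have hy : Tendsto y atTop (𝓝 ((c - 1)⁻¹)) := by
    have h0 : Tendsto (fun n : ℕ => c⁻¹ ^ n) atTop (𝓝 0) := by
      apply tendsto_pow_atTop_nhds_zero_of_lt_one
      · positivity
      · rw [inv_lt_one_iff₀]; right; exact hc
    have := (h0.mul_const (y 0 - (c - 1)⁻¹)).add_const ((c - 1)⁻¹)
    simp only [zero_mul, zero_add] at this
    exact this.congr (fun n => (hform n).symm)
  have hne : ((c - 1)⁻¹ : ℝ) ≠ 0 := by
    have : (0:ℝ) < c - 1 := by linarith
    positivity
  have := hy.inv₀ hne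
  rw [inv_inv] at this
  exact this.congr (fun n => by simp [hydef])
end

section
/- Let c = 1 and let (x_n) be a solution of x_{n+1} = x_{n-k}/(1 + x_n⋯x_{n-k}) with strictly positive initial conditions. Then the product P_n = x_n x_{n-1}⋯x_{n-k} is strictly positive, strictly decreasing, and converges to 0. -/
open Filter Topology

/-- For c = 1 and a strictly positive solution, the product of k+1 consecutive
terms is positive, strictly decreasing, and tends to 0.
(Indices shifted: x j here is x_{j-k}.) -/
theorem product_strictly_decreasing_to_zero (k : ℕ) (hk : 1 ≤ k)
    (x : ℕ → ℝ) (hinit : ∀ i : ℕ, i ≤ k → 0 < x i)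
    (hrec : ∀ n : ℕ,
      x (n + k + 1) = x n / (1 + ∏ i ∈ Finset.range (k + 1), x (n + i))) :
    (∀ n : ℕ, 0 < ∏ i ∈ Finset.range (k + 1), x (n + i)) ∧
      StrictAnti (fun n : ℕ => ∏ i ∈ Finset.range (k + 1), x (n + i)) ∧
      Tendsto (fun n : ℕ => ∏ i ∈ Finset.range (k + 1), x (n + i)) atTop
        (𝓝 0) := by
  set P : ℕ → ℝ := fun n => ∏ i ∈ Finset.range (k + 1), x (n + i) with hPdef
  -- positivity of all terms
  have hx : ∀ n, 0 < x n := by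
    intro n
    induction n using Nat.strong_induction_on with
    | _ n ih =>
      by_cases h : n ≤ k
      · exact hinit n h
      · obtain ⟨m, rfl⟩ : ∃ m, n = m + k + 1 := ⟨n - (k + 1), by omega⟩
        rw [hrec m]
        have hprod : 0 < ∏ i ∈ Finset.range (k + 1), x (m + i) := by
          apply Finset.prod_pos
          intro i hi
          exact ih (m + i) (by simp at hi; omega)
        have hm : 0 < x m := ih m (by omega)
        positivity
  have hP : ∀ n, 0 < P n := by
    intro n
    apply Finset.prod_pos
    intro i _
    exact hx _
  -- the key recurrence for P
  have hstep : ∀ n, P (n + 1) = P n / (1 + P n) := by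
    intro n
    have h1 : (∏ i ∈ Finset.range (k + 2), x (n + i)) = P n * x (n + (k + 1)) :=
      Finset.prod_range_succ (fun i => x (n + i)) (k + 1)
    have h2 : (∏ i ∈ Finset.range (k + 2), x (n + i)) = P (n + 1) * x n := by
      rw [Finset.prod_range_succ' (fun i => x (n + i)) (k + 1)]
      congr 1
      apply Finset.prod_congr rfl
      intro i _
      congr 1
      omega
    have hkey : P n * x (n + (k + 1)) = P (n + 1) * x n := by rw [← h1, h2]
    have hx' : x (n + k + 1) = x n / (1 + P n) := hrec n
    have hxn : x n ≠ 0 := (hx n).ne'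
    have hden : (1 : ℝ) + P n ≠ 0 := by have := hP n; positivity
    have hthis : P n * (x n / (1 + P n)) = P (n + 1) * x n := by
      rw [← hx']
      rw [show n + (k + 1) = n + k + 1 from by omega] at hkey
      exact hkey
    have h3 : (P n / (1 + P n)) * x n = P (n + 1) * x n := by
      rw [← hthis]; ring
    exact (mul_right_cancel₀ hxn h3).symm
  -- strict antitonicity
  have hanti : StrictAnti P := by
    apply strictAnti_nat_of_succ_lt
    intro n
    rw [hstep n]
    have h1 : 0 < P n := hP n
    rw [div_lt_iff₀ (by positivity)]
    nlinarith
  -- closed form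
  have hform : ∀ n : ℕ, P n = P 0 / (1 + n * P 0) := by
    intro n
    induction n with
    | zero => simp
    | succ n ih =>
      rw [hstep n, ih]
      have h0 : 0 < P 0 := hP 0
      have hd1 : (1 : ℝ) + n * P 0 ≠ 0 := by positivity
      have hd2 : (1 : ℝ) + (n + 1 : ℕ) * P 0 ≠ 0 := by positivity
      field_simp
      ring_nf
      push_cast; ring
  -- limit
  have hlim : Tendsto P atTop (𝓝 0) := by
    have h0 : 0 < P 0 := hP 0
    have hden : Tendsto (fun n : ℕ => 1 + (n : ℝ) * P 0) atTop atTop := by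
      apply tendsto_atTop_add_const_left
      exact Tendsto.atTop_mul_const h0 tendsto_natCast_atTop_atTop
    have := Tendsto.div_atTop (tendsto_const_nhds (x := P 0)) hden
    apply this.congr
    intro n
    exact (hform n).symm
  exact ⟨hP, hanti, hlim⟩
end

section
/- If a map f : ℝ → ℝ has fixed point x̄ with f'(x̄) = 1 and f''(x̄) < 0 (f twice continuously differentiable near x̄), then x̄ is semiasymptotically stable from the right: there is γ > 0 such that for 0 < x₀ - x̄ < γ, the iterates fⁿ(x₀) stay to the right of x̄ and converge to x̄. -/
open Filter Topology Set Metric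

/-- If f is C² near a fixed point x̄ with f'(x̄) = 1 and f''(x̄) < 0, then x̄ is
semiasymptotically stable from the right: for x₀ slightly to the right of x̄,
the iterates stay to the right of x̄ and converge to x̄. -/
theorem semiasymptotic_stability_from_right (f : ℝ → ℝ) (xbar : ℝ)
    (hC2 : ContDiffAt ℝ 2 f xbar) (hfix : f xbar = xbar)
    (hd1 : deriv f xbar = 1) (hd2 : deriv (deriv f) xbar < 0) :
    ∃ γ : ℝ, 0 < γ ∧
      ∀ x₀ : ℝ, xbar < x₀ → x₀ < xbar + γ →
        (∀ n : ℕ, xbar < f^[n] x₀) ∧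
          Tendsto (fun n : ℕ => f^[n] x₀) atTop (𝓝 xbar) := by
  obtain ⟨u, hu_nhds, hu⟩ := hC2.contDiffOn le_rfl (by simp)
  obtain ⟨ε, hε, hball⟩ := Metric.mem_nhds_iff.mp hu_nhds
  set B := ball xbar ε with hB
  have hxB : xbar ∈ B := mem_ball_self hε
  have hC2b : ContDiffOn ℝ 2 f B := hu.mono hball
  have hopen : IsOpen B := isOpen_ball
  have hd1' : ContDiffOn ℝ 1 (deriv f) B :=
    hC2b.deriv_of_isOpen hopen (by norm_num)
  have hdf_diff : DifferentiableOn ℝ f B := hC2b.differentiableOn (by norm_num)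
  have hdf_cont : ContinuousOn f B := hdf_diff.continuousOn
  -- deriv f differentiable at xbar
  have hdd : HasDerivAt (deriv f) (deriv (deriv f) xbar) xbar := by
    have : DifferentiableAt ℝ (deriv f) xbar :=
      (hd1'.differentiableOn (by norm_num)).differentiableAt (hopen.mem_nhds hxB)
    exact this.hasDerivAt
  -- deriv f continuous at xbar
  have hdc : ContinuousAt (deriv f) xbar := hdd.differentiableAt.continuousAt
  -- eventually deriv f > 0
  have hpos : ∀ᶠ x in 𝓝 xbar, 0 < deriv f x := by
    have : (0:ℝ) < deriv f xbar := by rw [hd1]; norm_num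
    exact continuousAt_const.eventually_lt hdc this
  -- eventually in nhdsWithin Ioi: deriv f < 1
  have hslope : Tendsto (slope (deriv f) xbar) (𝓝[≠] xbar) (𝓝 (deriv (deriv f) xbar)) :=
    hasDerivAt_iff_tendsto_slope.mp hdd
  have hlt1 : ∀ᶠ x in 𝓝[>] xbar, deriv f x < 1 := by
    have h1 : ∀ᶠ x in 𝓝[≠] xbar, slope (deriv f) xbar x < 0 :=
      hslope.eventually (Filter.Tendsto.eventually_lt_const hd2 tendsto_id) |>.mono fun x h => h
    have h2 : ∀ᶠ x in 𝓝[>] xbar, slope (deriv f) xbar x < 0 :=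
      nhdsWithin_mono xbar (fun x hx => ne_of_gt hx) h1
    filter_upwards [h2, self_mem_nhdsWithin] with x hx hx'
    have hx' : (xbar:ℝ) < x := hx'
    rw [slope_def_field] at hx
    have hnum : deriv f x - deriv f xbar < 0 := by
      by_contra h
      push_neg at h
      exact absurd (div_nonneg h (by linarith)) (not_le.mpr hx)
    rw [hd1] at hnum; linarith
  -- choose δ with good properties on Ioo xbar (xbar+δ)
  have hmemIoo : ∀ᶠ x in 𝓝[>] xbar, 0 < deriv f x ∧ deriv f x < 1 ∧ x ∈ B := by
    filter_upwards [nhdsWithin_le_nhds hpos, hlt1,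
      nhdsWithin_le_nhds (hopen.mem_nhds hxB)] with x h1 h2 h3
    exact ⟨h1, h2, h3⟩
  obtain ⟨b, hb, hIoo⟩ := mem_nhdsGT_iff_exists_Ioo_subset.mp hmemIoo
  rw [mem_Ioi] at hb
  set γ := min ((b - xbar) / 2) (ε / 2) with hγdef
  have hγpos : 0 < γ := lt_min (by linarith) (by linarith)
  -- closed interval [xbar, xbar + γ] properties
  have hsub : Icc xbar (xbar + γ) ⊆ B := by
    intro x hx
    rw [hB, mem_ball, Real.dist_eq, abs_sub_lt_iff]
    constructor
    · have := hx.2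
      have : γ ≤ ε / 2 := min_le_right _ _
      have := hx.2
      linarith [min_le_right ((b - xbar)/2) (ε/2), hx.2]
    · linarith [hx.1]
  have hsub2 : ∀ x, xbar < x → x ≤ xbar + γ → x ∈ Ioo xbar b := by
    intro x h1 h2
    refine ⟨h1, ?_⟩
    have : γ ≤ (b - xbar) / 2 := min_le_left _ _
    linarith
  -- key: for x in (xbar, xbar+γ], xbar < f x < x
  have key : ∀ x, xbar < x → x ≤ xbar + γ → xbar < f x ∧ f x < x := by
    intro x h1 h2
    have hxB' : x ∈ Icc xbar (xbar + γ) := ⟨le_of_lt h1, h2⟩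
    have hIccB : Icc xbar x ⊆ B := fun y hy => hsub ⟨hy.1, le_trans hy.2 h2⟩
    constructor
    · -- f strictly mono on [xbar, x]
      have hmono : StrictMonoOn f (Icc xbar x) := by
        apply strictMonoOn_of_deriv_pos (convex_Icc _ _)
          (hdf_cont.mono hIccB)
        intro y hy
        rw [interior_Icc] at hy
        exact (hIoo (hsub2 y hy.1 (le_trans (le_of_lt hy.2) h2))).1
      have := hmono (left_mem_Icc.mpr (le_of_lt h1)) (right_mem_Icc.mpr (le_of_lt h1)) h1
      rwa [hfix] at this
    · -- g = f - id strictly anti on [xbar, x]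
      have hanti : StrictAntiOn (fun y => f y - y) (Icc xbar x) := by
        apply strictAntiOn_of_deriv_neg (convex_Icc _ _)
          ((hdf_cont.mono hIccB).sub continuousOn_id)
        intro y hy
        rw [interior_Icc] at hy
        have hyB : y ∈ B := hIccB ⟨le_of_lt hy.1, le_of_lt hy.2⟩
        have hdy : DifferentiableAt ℝ f y :=
          hdf_diff.differentiableAt (hopen.mem_nhds hyB)
        have hlt := (hIoo (hsub2 y hy.1 (le_trans (le_of_lt hy.2) h2))).2.1
        rw [deriv_sub hdy differentiableAt_id, deriv_id]
        linarith
      have := hanti (left_mem_Icc.mpr (le_of_lt h1)) (right_mem_Icc.mpr (le_of_lt h1)) h1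
      have h3 : f x - x < f xbar - xbar := this
      rw [hfix] at h3
      linarith
  refine ⟨γ, hγpos, fun x₀ hx₀ hx₀' => ?_⟩
  -- iterates stay in (xbar, x₀]
  have hiter : ∀ n : ℕ, xbar < f^[n] x₀ ∧ f^[n] x₀ ≤ x₀ := by
    intro n
    induction n with
    | zero => simp [le_of_lt, hx₀]
    | succ n ih =>
      rw [Function.iterate_succ_apply']
      obtain ⟨k1, k2⟩ := key _ ih.1 (by linarith [ih.2])
      exact ⟨k1, le_trans (le_of_lt k2) ih.2⟩
  refine ⟨fun n => (hiter n).1, ?_⟩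
  -- sequence is antitone
  have hanti : Antitone (fun n : ℕ => f^[n] x₀) := by
    apply antitone_nat_of_succ_le
    intro n
    rw [Function.iterate_succ_apply']
    exact le_of_lt (key _ (hiter n).1 (by linarith [(hiter n).2])).2
  have hbdd : BddBelow (Set.range fun n : ℕ => f^[n] x₀) := by
    refine ⟨xbar, ?_⟩
    rintro y ⟨n, rfl⟩
    exact le_of_lt (hiter n).1
  have htend := tendsto_atTop_ciInf hanti hbdd
  set L := ⨅ n : ℕ, f^[n] x₀ with hL
  have hLlb : xbar ≤ L := le_ciInf fun n => le_of_lt (hiter n).1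
  have hLub : L ≤ x₀ := ciInf_le hbdd 0
  -- show L = xbar
  have hLfix : f L = L := by
    have hLB : L ∈ B := hsub ⟨hLlb, by linarith⟩
    have hcontL : ContinuousAt f L :=
      (hdf_diff.differentiableAt (hopen.mem_nhds hLB)).continuousAt
    have h1 : Tendsto (fun n : ℕ => f^[n+1] x₀) atTop (𝓝 L) :=
      htend.comp (tendsto_add_atTop_nat 1)
    have h2 : Tendsto (fun n : ℕ => f (f^[n] x₀)) atTop (𝓝 (f L)) :=
      hcontL.tendsto.comp htend
    have : (fun n : ℕ => f^[n+1] x₀) = fun n : ℕ => f (f^[n] x₀) := by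
      funext n; rw [Function.iterate_succ_apply']
    rw [this] at h1
    exact tendsto_nhds_unique h2 h1
  have hLeq : L = xbar := by
    rcases eq_or_lt_of_le hLlb with h | h
    · exact h.symm
    · exact absurd hLfix (ne_of_lt (key L h (by linarith)).2)
  rwa [hLeq] at htend
end
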